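/- For every integer x ≥ 1, every forest T with at least x + 1 vertices, and every vertex u of T, there exist a vertex w of T and a collection {C_1, …, C_t} of w-components of T such that u ∉ C_{[t]} and x ≤ |C_{[t]}| ≤ 2x − 1. -/

import Mathlib

open SimpleGraph Set

section Aux

private lemma num_lemma (x : ℕ) (hx : 1 ≤ x) {ι : Type*} [DecidableEq ι] (s : Finset ι)
    (n : ι → ℕ) (h1 : ∀ i ∈ s, 1 ≤ n i) (h : x ≤ ∑ i ∈ s, n i) :
    (∃ t ⊆ s, x ≤ ∑ i ∈ t, n i ∧ ∑ i ∈ t, n i ≤ 2 * x - 1) ∨ ∃ i ∈ s, 2 * x ≤ n i := by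
  by_cases hbig : ∃ i ∈ s, x ≤ n i
  · obtain ⟨i, his, hi⟩ := hbig
    by_cases h2 : 2 * x ≤ n i
    · exact Or.inr ⟨i, his, h2⟩
    · refine Or.inl ⟨{i}, by simpa using his, ?_, ?_⟩ <;> simp <;> omega
  · push_neg at hbig
    left
    have hsne : s ∈ s.powerset.filter (fun t => x ≤ ∑ i ∈ t, n i) := by
      simp [h]
    obtain ⟨t, htmem, hmin⟩ := Finset.exists_min_image _ (fun t => ∑ i ∈ t, n i)
      ⟨s, hsne⟩
    simp only [Finset.mem_filter, Finset.mem_powerset] at htmem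
    obtain ⟨hts, hxt⟩ := htmem
    refine ⟨t, hts, hxt, ?_⟩
    have htne : t.Nonempty := by
      rcases t.eq_empty_or_nonempty with rfl | h
      · simp at hxt; omega
      · exact h
    obtain ⟨i, hit⟩ := htne
    have hsum : ∑ j ∈ t.erase i, n j + n i = ∑ j ∈ t, n j := Finset.sum_erase_add t n hit
    have h1i : 1 ≤ n i := h1 i (hts hit)
    have hni : n i < x := hbig i (hts hit)
    have herase : ¬ (x ≤ ∑ j ∈ t.erase i, n j) := by
      intro hcon
      have := hmin (t.erase i) (by simp [Finset.mem_filter, hcon,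
        (Finset.erase_subset i t).trans hts])
      omega
    omega

private lemma ncard_biUnion' {V : Type} [Fintype V] {ι : Type*} (s : Finset ι) (f : ι → Set V)
    (hdisj : ∀ i ∈ s, ∀ j ∈ s, i ≠ j → Disjoint (f i) (f j)) :
    (⋃ i ∈ s, f i).ncard = ∑ i ∈ s, (f i).ncard := by
  classical
  induction s using Finset.induction with
  | empty => simp
  | insert _ _ ha ih =>
    rename_i a s'
    rw [Finset.sum_insert ha, Finset.set_biUnion_insert]
    rw [Set.ncard_union_eq ?_ (Set.toFinite _) (Set.toFinite _),
      ih (fun i hi j hj hij => hdisj i (by simp [hi]) j (by simp [hj]) hij)]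
    exact Set.disjoint_iUnion₂_right.mpr fun i hi =>
      hdisj a (by simp) i (by simp [hi]) (by rintro rfl; exact ha hi)

variable {V : Type} (T : SimpleGraph V)

private def cset (w : V) (c : (T.induce (Set.univ \ {w} : Set V)).ConnectedComponent) : Set V :=
  Subtype.val '' c.supp

private lemma cset_subset (w : V) (c) : cset T w c ⊆ Set.univ \ {w} := by
  rintro v ⟨v', _, rfl⟩; exact v'.2

private lemma cset_injective (w : V) : Function.Injective (cset T w) := fun _ _ h =>
  SimpleGraph.ConnectedComponent.supp_injective
    ((Set.image_injective.mpr Subtype.val_injective) h)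

private lemma cset_disjoint (w : V) (c d) (hcd : c ≠ d) :
    Disjoint (cset T w c) (cset T w d) := by
  rw [Set.disjoint_left]
  rintro v ⟨v', hv', rfl⟩ ⟨v'', hv'', hval⟩
  cases Subtype.val_injective hval
  exact hcd (hv'.symm.trans hv'')

private lemma mem_cset_self (w : V) (v : V) (hv : v ∈ (Set.univ \ {w} : Set V)) :
    v ∈ cset T w ((T.induce (Set.univ \ {w} : Set V)).connectedComponentMk ⟨v, hv⟩) :=
  ⟨⟨v, hv⟩, rfl, rfl⟩

private lemma walk_closed {w' : V} {D : Set V}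
    (hstep : ∀ a b : V, a ∈ D → a ≠ w' → b ≠ w' → T.Adj a b → b ∈ D)
    {a b : ↥(Set.univ \ {w'} : Set V)}
    (p : (T.induce (Set.univ \ {w'} : Set V)).Walk a b) (ha : (a : V) ∈ D) : (b : V) ∈ D := by
  induction p with
  | nil => exact ha
  | @cons a c b h p ih =>
    exact ih (hstep a c ha a.2.2 c.2.2 h)

private lemma exists_good (hT : T.IsAcyclic) (w : V) {D : Set V} (hne : D.Nonempty)
    (hDsub : D ⊆ Set.univ \ {w})
    (hDconn : ∀ a b, a ∈ D → b ∈ D → ∃ (ha : a ∈ (Set.univ \ {w} : Set V))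
      (hb : b ∈ (Set.univ \ {w} : Set V)),
      (T.induce (Set.univ \ {w} : Set V)).Reachable ⟨a, ha⟩ ⟨b, hb⟩) :
    ∃ w' ∈ D, ∀ a ∈ D, a ≠ w' → ¬ T.Adj w a := by
  classical
  by_cases h : ∃ z ∈ D, T.Adj w z
  · obtain ⟨z, hzD, hwz⟩ := h
    refine ⟨z, hzD, fun a haD haz hwa => ?_⟩
    obtain ⟨hz', ha', hreach⟩ := hDconn z a hzD haD
    obtain ⟨p⟩ := hreach
    set q := (p.map (SimpleGraph.Embedding.induce (Set.univ \ {w} : Set V)).toHom).bypass with hq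
    have hqpath : q.IsPath := SimpleGraph.Walk.bypass_isPath _
    have hwq : w ∉ q.support := by
      intro hw
      have := SimpleGraph.Walk.support_bypass_subset _ hw
      rw [SimpleGraph.Walk.support_map] at this
      obtain ⟨v', _, hv'⟩ := List.mem_map.mp this
      exact v'.2.2 hv'
    have hP2path : (SimpleGraph.Walk.cons hwz q).IsPath := hqpath.cons hwq
    have hP1 := hT.path_unique (SimpleGraph.Path.singleton hwa) ⟨_, hP2path⟩
    have hz_mem : z ∈ (SimpleGraph.Walk.cons hwz q).support :=
      List.mem_cons_of_mem _ q.start_mem_support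
    have hval := congrArg Subtype.val hP1
    have hz2 : z ∈ (↑(SimpleGraph.Path.singleton hwa) : T.Walk w a).support := by
      rw [hval]; exact hz_mem
    simp [SimpleGraph.Path.singleton, SimpleGraph.Walk.support_cons] at hz2
    rcases hz2 with rfl | rfl
    · exact (hDsub hzD).2 rfl
    · exact haz rfl
  · push_neg at h
    obtain ⟨w', hw'⟩ := hne
    exact ⟨w', hw', fun a haD _ => h a haD⟩

private lemma step (hT : T.IsAcyclic) (w : V)
    (c : (T.induce (Set.univ \ {w} : Set V)).ConnectedComponent)
    (hne : (cset T w c).Nonempty) :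
    ∃ w' ∈ cset T w c, ∀ c' : (T.induce (Set.univ \ {w'} : Set V)).ConnectedComponent,
      (cset T w' c' ∩ cset T w c).Nonempty → cset T w' c' ⊆ cset T w c \ {w'} := by
  set D := cset T w c with hD
  have hDsub : D ⊆ Set.univ \ {w} := cset_subset T w c
  have hmem : ∀ a, a ∈ D → ∃ h : a ∈ (Set.univ \ {w} : Set V),
      (T.induce (Set.univ \ {w} : Set V)).connectedComponentMk ⟨a, h⟩ = c := by
    rintro a ⟨a', ha', rfl⟩
    exact ⟨a'.2, ha'⟩
  have hDconn : ∀ a b, a ∈ D → b ∈ D → ∃ (ha : a ∈ (Set.univ \ {w} : Set V))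
      (hb : b ∈ (Set.univ \ {w} : Set V)),
      (T.induce (Set.univ \ {w} : Set V)).Reachable ⟨a, ha⟩ ⟨b, hb⟩ := by
    intro a b ha hb
    obtain ⟨ha', hac⟩ := hmem a ha
    obtain ⟨hb', hbc⟩ := hmem b hb
    exact ⟨ha', hb', SimpleGraph.ConnectedComponent.exact (hac.trans hbc.symm)⟩
  obtain ⟨w', hw'D, hgood⟩ := exists_good T hT w hne hDsub hDconn
  have hstep : ∀ a b : V, a ∈ D → a ≠ w' → b ≠ w' → T.Adj a b → b ∈ D := by
    intro a b haD haw' hbw' hab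
    by_cases hbw : b = w
    · subst hbw; exact absurd hab.symm (hgood a haD haw')
    · obtain ⟨ha', hac⟩ := hmem a haD
      have hb' : b ∈ (Set.univ \ {w} : Set V) := ⟨trivial, hbw⟩
      have hadj : (T.induce (Set.univ \ {w} : Set V)).Adj ⟨a, ha'⟩ ⟨b, hb'⟩ := by
        simpa using hab
      have hbc : (T.induce (Set.univ \ {w} : Set V)).connectedComponentMk ⟨b, hb'⟩ = c := by
        rw [← hac]
        exact SimpleGraph.ConnectedComponent.sound hadj.symm.reachable
      exact ⟨⟨b, hb'⟩, hbc, rfl⟩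
  refine ⟨w', hw'D, ?_⟩
  rintro c' ⟨v, hvc', hvD⟩
  rintro b ⟨b', hb', rfl⟩
  obtain ⟨v', hv', hval⟩ := hvc'
  obtain ⟨p⟩ : (T.induce (Set.univ \ {w'} : Set V)).Reachable v' b' :=
    SimpleGraph.ConnectedComponent.exact (hv'.trans hb'.symm)
  have hbD : (b' : V) ∈ D := walk_closed T hstep p (hval.symm ▸ hvD)
  exact ⟨hbD, b'.2.2⟩

end Aux

/-- `C` is a `w`-component of the forest `T` restricted to the vertex set `S`:
`C` is the vertex set of a connected component of the graph induced by `T` on `S \ {w}`. -/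
def DelComp {V : Type*} (T : SimpleGraph V) (S : Set V) (w : V) (C : Set V) : Prop :=
  ∃ c : (T.induce (S \ {w})).ConnectedComponent, C = Subtype.val '' c.supp

section Aux2

variable {V : Type} [Fintype V]

private lemma assemble (T : SimpleGraph V) (x : ℕ) (u w' : V)
    (t : Finset ((T.induce (Set.univ \ {w'} : Set V)).ConnectedComponent))
    (hu : ∀ c ∈ t, u ∉ cset T w' c)
    (hlo : x ≤ ∑ c ∈ t, (cset T w' c).ncard)
    (hhi : ∑ c ∈ t, (cset T w' c).ncard ≤ 2 * x - 1) :
    ∃ (w₀ : V) (k : ℕ) (C : Fin k → Set V),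
      (∀ i, DelComp T Set.univ w₀ (C i)) ∧ Function.Injective C ∧
      u ∉ ⋃ i, C i ∧ x ≤ (⋃ i, C i).ncard ∧ (⋃ i, C i).ncard ≤ 2 * x - 1 := by
  classical
  set e := t.equivFin with he
  refine ⟨w', t.card, fun i => cset T w' ↑(e.symm i), ?_, ?_, ?_, ?_, ?_⟩
  · intro i; exact ⟨↑(e.symm i), rfl⟩
  · intro i j hij
    have h2 : e.symm i = e.symm j := Subtype.ext (cset_injective T w' hij)
    simpa using congrArg e h2
  all_goals
    have hUnion : ⋃ i, cset T w' ↑(e.symm i) = ⋃ c ∈ t, cset T w' c := by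
      ext v
      simp only [Set.mem_iUnion]
      constructor
      · rintro ⟨i, hi⟩; exact ⟨↑(e.symm i), (e.symm i).2, hi⟩
      · rintro ⟨c, hc, hv⟩
        exact ⟨e ⟨c, hc⟩, by simpa using hv⟩
  · rw [hUnion]
    simp only [Set.mem_iUnion]
    rintro ⟨c, hc, hv⟩
    exact hu c hc hv
  · rw [hUnion, ncard_biUnion' t _ (fun i _ j _ hij => cset_disjoint T w' i j hij)]
    exact hlo
  · rw [hUnion, ncard_biUnion' t _ (fun i _ j _ hij => cset_disjoint T w' i j hij)]
    exact hhi

private lemma main_ind (T : SimpleGraph V) (hT : T.IsAcyclic) (x : ℕ) (hx : 1 ≤ x) (u : V) :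
    ∀ (n : ℕ) (w : V) (c : (T.induce (Set.univ \ {w} : Set V)).ConnectedComponent),
      u ∉ cset T w c → 2 * x ≤ (cset T w c).ncard → (cset T w c).ncard ≤ n →
      ∃ (w₀ : V) (k : ℕ) (C : Fin k → Set V),
        (∀ i, DelComp T Set.univ w₀ (C i)) ∧ Function.Injective C ∧
        u ∉ ⋃ i, C i ∧ x ≤ (⋃ i, C i).ncard ∧ (⋃ i, C i).ncard ≤ 2 * x - 1 := by
  intro n
  induction n with
  | zero => intro w c _ h2 h0; omega
  | succ n ih =>
    intro w c hu h2x hcard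
    classical
    set D := cset T w c with hDdef
    have hne : D.Nonempty := by
      rw [← Set.ncard_pos (Set.toFinite _)]
      omega
    obtain ⟨w', hw'D, hsub⟩ := step T hT w c hne
    haveI : Fintype ((T.induce (Set.univ \ {w'} : Set V)).ConnectedComponent) :=
      Fintype.ofFinite _
    set F := Finset.univ.filter
      (fun c' : (T.induce (Set.univ \ {w'} : Set V)).ConnectedComponent =>
        (cset T w' c' ∩ D).Nonempty) with hF
    have hFsub : ∀ c' ∈ F, cset T w' c' ⊆ D \ {w'} := fun c' hc' =>
      hsub c' (by simpa [hF] using hc')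
    have hcover : ⋃ c' ∈ F, cset T w' c' = D \ {w'} := by
      apply Set.Subset.antisymm
      · exact Set.iUnion₂_subset hFsub
      · rintro v ⟨hvD, hvw'⟩
        have hv' : v ∈ (Set.univ \ {w'} : Set V) := ⟨trivial, hvw'⟩
        have hcF : ((T.induce (Set.univ \ {w'} : Set V)).connectedComponentMk ⟨v, hv'⟩) ∈ F := by
          simp only [hF, Finset.mem_filter, Finset.mem_univ, true_and]
          exact ⟨v, mem_cset_self T w' v hv', hvD⟩
        exact Set.mem_biUnion hcF (mem_cset_self T w' v hv')
    have hsum : ∑ c' ∈ F, (cset T w' c').ncard = (D \ {w'}).ncard := by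
      rw [← ncard_biUnion' F _ (fun i _ j _ hij => cset_disjoint T w' i j hij), hcover]
    have hDcard : (D \ {w'}).ncard = D.ncard - 1 :=
      Set.ncard_diff_singleton_of_mem hw'D
    have h1 : ∀ c' ∈ F, 1 ≤ (cset T w' c').ncard := by
      intro c' hc'
      simp only [hF, Finset.mem_filter, Finset.mem_univ, true_and] at hc'
      obtain ⟨v, hv, _⟩ := hc'
      have : (cset T w' c').Nonempty := ⟨v, hv⟩
      rw [← Set.ncard_pos (Set.toFinite _)] at this
      omega
    rcases num_lemma x hx F (fun c' => (cset T w' c').ncard) h1 (by simp only [hsum, hDcard]; omega) with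
      ⟨t, hts, hlo, hhi⟩ | ⟨c', hc'F, hbig⟩
    · refine assemble T x u w' t ?_ hlo hhi
      intro c0 hc0 hu0
      exact hu (Set.diff_subset (hFsub c0 (hts hc0) hu0))
    · refine ih w' c' ?_ hbig ?_
      · intro hu0
        exact hu (Set.diff_subset (hFsub c' hc'F hu0))
      · have hle : (cset T w' c').ncard ≤ (D \ {w'}).ncard :=
          Set.ncard_le_ncard (hFsub c' hc'F) (Set.toFinite _)
        omega

end Aux2

/-- For every `x ≥ 1`, every forest `T` on at least `x + 1` vertices and every vertex `u`,
there are a vertex `w` and a collection `C 0, …, C (t-1)` of distinct `w`-components of `T`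
avoiding `u` whose union has between `x` and `2x − 1` vertices. -/
theorem statement10 (x : ℕ) (hx : 1 ≤ x) (V : Type) [Fintype V] (T : SimpleGraph V)
    (hT : T.IsAcyclic) (hcard : x + 1 ≤ Fintype.card V) (u : V) :
    ∃ (w : V) (t : ℕ) (C : Fin t → Set V),
      (∀ i, DelComp T Set.univ w (C i)) ∧ Function.Injective C ∧
      u ∉ ⋃ i, C i ∧ x ≤ (⋃ i, C i).ncard ∧ (⋃ i, C i).ncard ≤ 2 * x - 1 := by
  classical
  haveI : Fintype ((T.induce (Set.univ \ {u} : Set V)).ConnectedComponent) :=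
    Fintype.ofFinite _
  set F : Finset ((T.induce (Set.univ \ {u} : Set V)).ConnectedComponent) := Finset.univ with hF
  have hcover : ⋃ c ∈ F, cset T u c = (Set.univ \ {u} : Set V) := by
    apply Set.Subset.antisymm
    · exact Set.iUnion₂_subset (fun c _ => cset_subset T u c)
    · intro v hv
      exact Set.mem_biUnion (Finset.mem_univ _) (mem_cset_self T u v hv)
  have hsum : ∑ c ∈ F, (cset T u c).ncard = (Set.univ \ {u} : Set V).ncard := by
    rw [← ncard_biUnion' F _ (fun i _ j _ hij => cset_disjoint T u i j hij), hcover]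
  have huniv : (Set.univ \ {u} : Set V).ncard = Fintype.card V - 1 := by
    rw [Set.ncard_diff_singleton_of_mem (Set.mem_univ u), Set.ncard_univ,
      Nat.card_eq_fintype_card]
  have h1 : ∀ c ∈ F, 1 ≤ (cset T u c).ncard := by
    intro c _
    obtain ⟨v, hv⟩ := c.exists_rep
    have : (cset T u c).Nonempty := ⟨↑v, v, hv, rfl⟩
    rw [← Set.ncard_pos (Set.toFinite _)] at this
    omega
  rcases num_lemma x hx F (fun c => (cset T u c).ncard) h1 (by simp only [hsum, huniv]; omega) with
    ⟨t, _, hlo, hhi⟩ | ⟨c, _, hbig⟩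
  · refine assemble T x u u t ?_ hlo hhi
    intro c0 _ hu0
    exact (cset_subset T u c0 hu0).2 rfl
  · refine main_ind T hT x hx u (Fintype.card V) u c ?_ hbig ?_
    · intro hu0
      exact (cset_subset T u c hu0).2 rfl
    · have := Set.ncard_le_ncard (cset_subset T u c) (Set.toFinite _)
      omega
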